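/- Let X be a Banach space, N ∈ ℕ, and suppose that for every finite family P₁,…,P_n of norm-one N-homogeneous continuous polynomials on X and every ε > 0 there exists f ∈ S_{X*} with ‖Pᵢ + f^N‖ > 2 − ε for all i. Then the norm of 𝒫(^N X) is octahedral. -/
import Mathlib

open Filter Topology

/-- A sequence in a Banach space is equivalent to the canonical basis of `c₀`. -/
def IsEquivC0Basis {X : Type*} [NormedAddCommGroup X] [NormedSpace ℝ X] (x : ℕ → X) : Prop :=
  ∃ a b : ℝ, 0 < a ∧ a ≤ b ∧ ∀ (n : ℕ) (l : Fin n → ℝ),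
    a * (⨆ i, |l i|) ≤ ‖∑ i, l i • x (i : ℕ)‖ ∧
    ‖∑ i, l i • x (i : ℕ)‖ ≤ b * (⨆ i, |l i|)

/-- The sequential strong diameter two property. -/
def SeqSD2P (X : Type*) [NormedAddCommGroup X] [NormedSpace ℝ X] : Prop :=
  ∀ (m : ℕ) (x : Fin m → X), (∀ i, ‖x i‖ = 1) →
    ∃ (y : Fin m → ℕ → X) (z : ℕ → X),
      (∀ i n, ‖y i n‖ = 1) ∧ (∀ n, ‖z n‖ = 1) ∧
      (∀ i, Tendsto (fun n => ‖x i - y i n‖) atTop (𝓝 0) ∨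
        IsEquivC0Basis (fun n => x i - y i n)) ∧
      IsEquivC0Basis z ∧
      (∀ i, Tendsto (fun n => ‖y i n + z n‖) atTop (𝓝 1) ∧
        Tendsto (fun n => ‖y i n - z n‖) atTop (𝓝 1))

/-- `P : X → ℝ` is a continuous `N`-homogeneous polynomial. -/
def IsHomogPoly {X : Type*} [NormedAddCommGroup X] [NormedSpace ℝ X]
    (N : ℕ) (P : X → ℝ) : Prop :=
  ∃ A : ContinuousMultilinearMap ℝ (fun _ : Fin N => X) ℝ, ∀ x, P x = A (fun _ => x)

/-- The norm of a polynomial: its supremum on the closed unit ball. -/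
noncomputable def polyNorm {X : Type*} [NormedAddCommGroup X] [NormedSpace ℝ X]
    (P : X → ℝ) : ℝ :=
  sSup {r : ℝ | ∃ x : X, ‖x‖ ≤ 1 ∧ r = |P x|}

section Aux

variable {X : Type*} [NormedAddCommGroup X] [NormedSpace ℝ X]

lemma polyNorm_eq_norm (P : X → ℝ)
    (F : BoundedContinuousFunction (Metric.closedBall (0:X) 1) ℝ)
    (hF : ∀ y : Metric.closedBall (0:X) 1, F y = P y) : polyNorm P = ‖F‖ := by
  have hset : {r : ℝ | ∃ x : X, ‖x‖ ≤ 1 ∧ r = |P x|}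
      = Set.range (fun y : Metric.closedBall (0:X) 1 => ‖F y‖) := by
    ext r
    constructor
    · rintro ⟨x, hx, rfl⟩
      exact ⟨⟨x, by simpa [mem_closedBall_zero_iff] using hx⟩, by simp [hF, Real.norm_eq_abs]⟩
    · rintro ⟨y, rfl⟩
      exact ⟨y, mem_closedBall_zero_iff.mp y.2, by simp [hF, Real.norm_eq_abs]⟩
  rw [polyNorm, hset]
  exact (BoundedContinuousFunction.norm_eq_iSup_norm F).symm

noncomputable def restrBall (P : X → ℝ) (hc : Continuous P) (C : ℝ)
    (hC : ∀ x : X, ‖x‖ ≤ 1 → |P x| ≤ C) :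
    BoundedContinuousFunction (Metric.closedBall (0:X) 1) ℝ :=
  BoundedContinuousFunction.ofNormedAddCommGroup (fun y => P y)
    (hc.comp continuous_subtype_val)
    C (fun y => hC y (mem_closedBall_zero_iff.mp y.2))

@[simp] lemma restrBall_apply (P : X → ℝ) (hc : Continuous P) (C : ℝ)
    (hC : ∀ x : X, ‖x‖ ≤ 1 → |P x| ≤ C) (y : Metric.closedBall (0:X) 1) :
    restrBall P hc C hC y = P y := rfl

end Aux

/-- Finite δ-net of the unit sphere of a finite dimensional subspace. -/
lemma net_lemma {E : Type*} [NormedAddCommGroup E] [NormedSpace ℝ E]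
    (W : Submodule ℝ E) [FiniteDimensional ℝ W] {δ : ℝ} (hδ : 0 < δ) :
    ∃ (n : ℕ) (U : Fin n → E), (∀ j, U j ∈ W) ∧ (∀ j, ‖U j‖ = 1) ∧
      ∀ w : W, ‖w‖ = 1 → ∃ j, ‖(w : E) - U j‖ < δ := by
  obtain ⟨tset, hts, htfin, htcov⟩ := Metric.finite_approx_of_totallyBounded
    (isCompact_sphere (0 : W) 1).totallyBounded δ hδ
  refine ⟨htfin.toFinset.card, fun j => ((htfin.toFinset.equivFin.symm j : W) : E),
    fun j => ((htfin.toFinset.equivFin.symm j : W)).2, ?_, ?_⟩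
  · intro j
    have hmem := htfin.mem_toFinset.mp (htfin.toFinset.equivFin.symm j).2
    have hsp := hts hmem
    rw [mem_sphere_zero_iff_norm] at hsp
    rw [Submodule.norm_coe]
    exact hsp
  · intro w hw
    have hsph : w ∈ Metric.sphere (0 : W) 1 := by
      rw [mem_sphere_zero_iff_norm]; exact hw
    have hcv := htcov hsph
    simp only [Set.mem_iUnion] at hcv
    obtain ⟨u, hu, hball⟩ := hcv
    refine ⟨htfin.toFinset.equivFin ⟨u, htfin.mem_toFinset.mpr hu⟩, ?_⟩
    simp only [Equiv.symm_apply_apply]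
    have hd := Metric.mem_ball.mp hball
    rw [dist_eq_norm] at hd
    calc ‖(w : E) - (u : E)‖ = ‖((w - u : W) : E)‖ := by push_cast; rfl
      _ = ‖(w - u : W)‖ := Submodule.norm_coe _
      _ < δ := hd

/-- The key octahedrality estimate from a δ-net with near-norming functionals. -/
lemma key_lemma {E : Type*} [NormedAddCommGroup E] [NormedSpace ℝ E]
    (W : Submodule ℝ E) (q : E) (hq : ‖q‖ = 1) {δ ε : ℝ} (hδ : 0 < δ) (h2δ : 2 * δ ≤ ε)
    {n : ℕ} (U : Fin n → E) (hUn : ∀ j, ‖U j‖ = 1)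
    (hnet : ∀ w : W, ‖w‖ = 1 → ∃ j, ‖(w : E) - U j‖ < δ)
    (hphi : ∀ j, ∃ φ : E →ₗ[ℝ] ℝ, (∀ x, |φ x| ≤ ‖x‖) ∧ 2 - δ < |φ (U j + q)|) :
    ∀ v ∈ W, ∀ lam : ℝ, 0 ≤ lam → (1 - ε) * (‖v‖ + lam) ≤ ‖v + lam • q‖ := by
  intro v hv lam hlam
  have hε : 0 < ε := lt_of_lt_of_le (by linarith) h2δ
  rcases eq_or_lt_of_le (norm_nonneg v) with ht0 | ht
  · have hv0 : v = 0 := norm_eq_zero.mp ht0.symm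
    rw [hv0]
    simp only [zero_add, norm_smul, hq, mul_one, norm_zero, Real.norm_eq_abs,
      abs_of_nonneg hlam]
    nlinarith
  · set t := ‖v‖ with htdef
    have hwmem : (t⁻¹ • v) ∈ W := Submodule.smul_mem _ _ hv
    have hwnorm : ‖(⟨t⁻¹ • v, hwmem⟩ : W)‖ = 1 := by
      rw [Submodule.coe_norm]
      simp only [norm_smul, Real.norm_eq_abs, abs_of_pos (inv_pos.mpr ht)]
      exact inv_mul_cancel₀ (ne_of_gt ht)
    obtain ⟨j, hjd⟩ := hnet ⟨t⁻¹ • v, hwmem⟩ hwnorm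
    obtain ⟨φ, hφ1, hφ2⟩ := hphi j
    have hab : φ (U j + q) = φ (U j) + φ q := map_add φ _ _
    set a := φ (U j) with ha
    set b := φ q with hb
    have haa : |a| ≤ 1 := by rw [ha]; calc |φ (U j)| ≤ ‖U j‖ := hφ1 _
                                        _ = 1 := hUn j
    have hbb : |b| ≤ 1 := by rw [hb]; calc |φ q| ≤ ‖q‖ := hφ1 _
                                        _ = 1 := hq
    set w := t⁻¹ * φ v with hw
    have hwa : |w - a| < δ := by
      have h1 : φ (t⁻¹ • v - U j) = w - a := by
        rw [map_sub, map_smul, smul_eq_mul, ha, hw]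
      calc |w - a| = |φ (t⁻¹ • v - U j)| := by rw [h1]
        _ ≤ ‖t⁻¹ • v - U j‖ := hφ1 _
        _ < δ := hjd
    have hvw : φ v = t * w := by
      rw [hw]; field_simp
    have hmain : |φ v + lam * b| ≤ ‖v + lam • q‖ := by
      have h1 : φ (v + lam • q) = φ v + lam * b := by
        rw [map_add, map_smul, smul_eq_mul, hb]
      calc |φ v + lam * b| = |φ (v + lam • q)| := by rw [h1]
        _ ≤ ‖v + lam • q‖ := hφ1 _
    rw [hvw] at hmain
    rw [hab] at hφ2
    rw [abs_lt] at hwa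
    rw [abs_le] at haa hbb
    rcases abs_cases (a + b) with ⟨hs, _⟩ | ⟨hs, _⟩
    · have hsgn : 2 - δ < a + b := by rw [← hs]; exact hφ2
      have hb1 : 1 - δ < b := by linarith [haa.2]
      have ha1 : 1 - δ < a := by linarith [hbb.2]
      have hw1 : 1 - 2 * δ < w := by linarith [hwa.1]
      have habs : t * w + lam * b ≤ |t * w + lam * b| := le_abs_self _
      nlinarith
    · have hsgn : 2 - δ < -(a + b) := by rw [← hs]; exact hφ2
      have hb1 : 1 - δ < -b := by linarith [haa.1]
      have ha1 : 1 - δ < -a := by linarith [hbb.1]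
      have hw1 : 1 - 2 * δ < -w := by linarith [hwa.2]
      have habs : -(t * w + lam * b) ≤ |t * w + lam * b| := neg_le_abs _
      nlinarith

set_option maxHeartbeats 2000000 in
theorem stmt17 {X : Type*} [NormedAddCommGroup X] [NormedSpace ℝ X] [CompleteSpace X]
    (N : ℕ) (hN : 1 ≤ N)
    (h : ∀ (n : ℕ) (P : Fin n → X → ℝ), (∀ i, IsHomogPoly N (P i)) →
      (∀ i, polyNorm (P i) = 1) → ∀ ε : ℝ, 0 < ε →
        ∃ f : X →L[ℝ] ℝ, ‖f‖ = 1 ∧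
          ∀ i, polyNorm (fun x => P i x + (f x) ^ N) > 2 - ε) :
    ∀ (m : ℕ) (P : Fin m → X → ℝ), (∀ i, IsHomogPoly N (P i)) →
      ∀ ε : ℝ, 0 < ε →
        ∃ Q : X → ℝ, IsHomogPoly N Q ∧ polyNorm Q = 1 ∧
          ∀ (c : Fin m → ℝ) (lam : ℝ),
            polyNorm (fun x => (∑ i, c i * P i x) + lam * Q x) ≥
              (1 - ε) * (polyNorm (fun x => ∑ i, c i * P i x) + |lam|) := by
  classical
  intro m P hP ε hε
  choose A hA using hP
  have hPc : ∀ i, Continuous (P i) := by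
    intro i
    have hcont : Continuous fun x : X => (A i) (fun _ => x) :=
      (A i).cont.comp (continuous_pi fun _ => continuous_id)
    have heq : P i = fun x => (A i) (fun _ => x) := funext (hA i)
    rw [heq]; exact hcont
  have hPb : ∀ i (x : X), ‖x‖ ≤ 1 → |P i x| ≤ ‖A i‖ := by
    intro i x hx
    rw [hA i x]
    calc |(A i) (fun _ => x)| ≤ ‖A i‖ * ∏ _j : Fin N, ‖x‖ := (A i).le_opNorm _
      _ ≤ ‖A i‖ * 1 := by
          apply mul_le_mul_of_nonneg_left _ (norm_nonneg _)
          simp only [Finset.prod_const, Finset.card_univ, Fintype.card_fin]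
          exact pow_le_one₀ (norm_nonneg x) hx
      _ = ‖A i‖ := mul_one _
  let g : Fin m → BoundedContinuousFunction (Metric.closedBall (0:X) 1) ℝ :=
    fun i => restrBall (P i) (hPc i) ‖A i‖ (hPb i)
  have hgPy : ∀ (i : Fin m) (y : Metric.closedBall (0:X) 1), (g i) y = P i y :=
    fun i y => rfl
  haveI : FiniteDimensional ℝ (Submodule.span ℝ (Set.range g)) :=
    FiniteDimensional.span_of_finite ℝ (Set.finite_range g)
  set δ := min (ε/2) (1/2) with hδdef
  have hδpos : 0 < δ := lt_min (by linarith) (by norm_num)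
  have hδhalf : δ ≤ 1/2 := min_le_right _ _
  have h2δ : 2 * δ ≤ ε := by
    have := min_le_left (ε/2) (1/2); linarith
  obtain ⟨n, U, hUmem, hUnorm, hUnet⟩ := net_lemma (Submodule.span ℝ (Set.range g)) hδpos
  have hcoef : ∀ j : Fin n, ∃ d : Fin m → ℝ, ∑ i, d i • g i = U j := by
    intro j
    exact (Submodule.mem_span_range_iff_exists_fun ℝ).mp (hUmem j)
  choose d hd using hcoef
  set R : Fin n → X → ℝ := fun j x => ∑ i, d j i * P i x with hR
  have hRhomog : ∀ j, IsHomogPoly N (R j) := by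
    intro j
    refine ⟨∑ i, d j i • A i, fun x => ?_⟩
    simp [hR, hA, ContinuousMultilinearMap.sum_apply, ContinuousMultilinearMap.smul_apply,
      smul_eq_mul]
  have hRrep : ∀ j (y : Metric.closedBall (0:X) 1), (U j) y = R j y := by
    intro j y
    rw [← hd j]
    have hsum := congrFun (BoundedContinuousFunction.coe_sum Finset.univ
      (fun i => d j i • g i)) y
    rw [hsum, Finset.sum_apply]
    refine Finset.sum_congr rfl fun i _ => ?_
    rw [BoundedContinuousFunction.coe_smul]
    simp only [smul_eq_mul]
    rw [hgPy i y]
  have hRnorm : ∀ j, polyNorm (R j) = 1 := by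
    intro j
    rw [polyNorm_eq_norm (R j) (U j) (hRrep j)]
    exact hUnorm j
  obtain ⟨f, hf1, hf2⟩ := h n R hRhomog hRnorm δ hδpos
  set Q : X → ℝ := fun x => (f x) ^ N with hQ
  have hQc : Continuous Q := (f.continuous).pow N
  have hfx1 : ∀ x : X, ‖x‖ ≤ 1 → |f x| ≤ 1 := by
    intro x hx
    calc |f x| = ‖f x‖ := (Real.norm_eq_abs _).symm
      _ ≤ ‖f‖ * ‖x‖ := f.le_opNorm x
      _ ≤ 1 := by rw [hf1, one_mul]; exact hx
  have hQb : ∀ x : X, ‖x‖ ≤ 1 → |Q x| ≤ 1 := by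
    intro x hx
    rw [hQ]
    simp only [abs_pow]
    exact pow_le_one₀ (abs_nonneg _) (hfx1 x hx)
  set q : BoundedContinuousFunction (Metric.closedBall (0:X) 1) ℝ :=
    restrBall Q hQc 1 hQb with hq
  have hNpos : (0:ℝ) < N := by exact_mod_cast Nat.lt_of_lt_of_le Nat.zero_lt_one hN
  have hqnorm : ‖q‖ = 1 := by
    apply le_antisymm
    · rw [BoundedContinuousFunction.norm_le (by norm_num : (0:ℝ) ≤ 1)]
      intro y
      have := hQb y (mem_closedBall_zero_iff.mp y.2)
      rw [Real.norm_eq_abs]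
      exact this
    · refine le_of_forall_pos_le_add ?_
      intro η hη
      set ρ := min (η / N) 1 with hρ
      have hρpos : 0 < ρ := lt_min (div_pos hη hNpos) one_pos
      have hρ1 : ρ ≤ 1 := min_le_right _ _
      have hρη : (N : ℝ) * ρ ≤ η := by
        have h1 : ρ ≤ η / N := min_le_left _ _
        rw [le_div_iff₀ hNpos] at h1
        linarith [h1]
      have hx : ∃ x : X, ‖x‖ ≤ 1 ∧ 1 - ρ < ‖f x‖ := by
        by_contra hcon
        push_neg at hcon
        have : ‖f‖ ≤ 1 - ρ :=
          ContinuousLinearMap.opNorm_le_of_unit_norm (by linarith)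
            (fun x hx => hcon x (le_of_eq hx))
        rw [hf1] at this; linarith
      obtain ⟨x, hx1, hx2⟩ := hx
      have hy : (1 : ℝ) - η ≤ ‖q ⟨x, mem_closedBall_zero_iff.mpr hx1⟩‖ := by
        have h1 : (1 - ρ) ^ N ≤ |f x| ^ N := by
          apply pow_le_pow_left₀ (by linarith)
          rw [← Real.norm_eq_abs]; exact hx2.le
        have h2 : 1 + (N : ℝ) * (-ρ) ≤ (1 + (-ρ)) ^ N :=
          one_add_mul_le_pow (by linarith) N
        have h3 : ‖q ⟨x, mem_closedBall_zero_iff.mpr hx1⟩‖ = |f x| ^ N := by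
          rw [Real.norm_eq_abs]
          show |f x ^ N| = _
          rw [abs_pow]
        rw [h3]
        have h4 : (1:ℝ) + (-ρ) = 1 - ρ := by ring
        rw [h4] at h2
        nlinarith
      have := BoundedContinuousFunction.norm_coe_le_norm q
        ⟨x, mem_closedBall_zero_iff.mpr hx1⟩
      linarith
  have hQhomog : IsHomogPoly N Q := by
    refine ⟨(ContinuousMultilinearMap.mkPiAlgebra ℝ (Fin N) ℝ).compContinuousLinearMap
      (fun _ => f), fun x => ?_⟩
    simp [hQ, ContinuousMultilinearMap.compContinuousLinearMap_apply,
      ContinuousMultilinearMap.mkPiAlgebra_apply, Finset.prod_const]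
  have hQnorm : polyNorm Q = 1 := by
    rw [polyNorm_eq_norm Q q (fun y => rfl)]; exact hqnorm
  -- near-norming evaluation functionals
  have hphi : ∀ j, ∃ φ : BoundedContinuousFunction (Metric.closedBall (0:X) 1) ℝ →ₗ[ℝ] ℝ,
      (∀ u, |φ u| ≤ ‖u‖) ∧ 2 - δ < |φ (U j + q)| := by
    intro j
    have hUpoint : ∃ y : Metric.closedBall (0:X) 1, 2 - δ < |(U j + q) y| := by
      by_contra hcon
      push_neg at hcon
      have hle : ‖U j + q‖ ≤ 2 - δ := by
        rw [BoundedContinuousFunction.norm_le (by linarith : (0:ℝ) ≤ 2 - δ)]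
        intro y
        rw [Real.norm_eq_abs]
        exact hcon y
      have heq : polyNorm (fun x => R j x + (f x) ^ N) = ‖U j + q‖ := by
        apply polyNorm_eq_norm
        intro y
        rw [BoundedContinuousFunction.add_apply, hRrep j y]
        rfl
      have := hf2 j
      rw [heq] at this
      linarith
    obtain ⟨y, hy⟩ := hUpoint
    refine ⟨{ toFun := fun u => u y,
              map_add' := by intro u v; simp,
              map_smul' := by intro c u; simp }, ?_, ?_⟩
    · intro u
      have := BoundedContinuousFunction.norm_coe_le_norm u y
      rw [Real.norm_eq_abs] at this
      exact this
    · exact hy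
  have key := key_lemma (Submodule.span ℝ (Set.range g)) q hqnorm hδpos h2δ U hUnorm
    (fun w hw => hUnet w hw) hphi
  refine ⟨Q, hQhomog, hQnorm, ?_⟩
  intro c lam
  set v : BoundedContinuousFunction (Metric.closedBall (0:X) 1) ℝ := ∑ i, c i • g i with hv
  have hvF : v ∈ Submodule.span ℝ (Set.range g) := Submodule.sum_mem _ (fun i _ =>
    Submodule.smul_mem _ _ (Submodule.subset_span (Set.mem_range_self i)))
  have hrep1 : ∀ y : Metric.closedBall (0:X) 1, v y = ∑ i, c i * P i y := by
    intro y
    rw [hv]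
    have hsum := congrFun (BoundedContinuousFunction.coe_sum Finset.univ
      (fun i => c i • g i)) y
    rw [hsum, Finset.sum_apply]
    refine Finset.sum_congr rfl fun i _ => ?_
    rw [BoundedContinuousFunction.coe_smul]
    simp only [smul_eq_mul]
    rw [hgPy i y]
  have e1 : polyNorm (fun x => ∑ i, c i * P i x) = ‖v‖ :=
    polyNorm_eq_norm _ v hrep1
  have e2 : polyNorm (fun x => (∑ i, c i * P i x) + lam * Q x) = ‖v + lam • q‖ := by
    apply polyNorm_eq_norm
    intro y
    rw [BoundedContinuousFunction.add_apply, hrep1 y, BoundedContinuousFunction.coe_smul]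
    simp only [smul_eq_mul]
    rfl
  rw [ge_iff_le, e1, e2]
  rcases le_or_gt 0 lam with hlam | hlam
  · rw [abs_of_nonneg hlam]
    exact key v hvF lam hlam
  · have hkey := key (-v) (Submodule.neg_mem _ hvF) (-lam) (by linarith)
    rw [norm_neg] at hkey
    rw [abs_of_neg hlam]
    have hne : ‖(-v) + (-lam) • q‖ = ‖v + lam • q‖ := by
      rw [show (-v) + (-lam) • q = -(v + lam • q) by module, norm_neg]
    rw [hne] at hkey
    exact hkey
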